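/- Let n ≥ 2 and r, s > 0. Define p(u,v) = ½φ(u)φ(v - √(2(r+s)log n)) + ½φ(u)φ(v + √(2(r+s)log n)) and q(u,v) = ½φ(u - √(2r log n))φ(v - √(2s log n)) + ½φ(u + √(2r log n))φ(v + √(2s log n)), where φ is the standard normal density. Then for all u, v ∈ ℝ, |log(q(u,v)/p(u,v)) - √(2 log n)·(|√r·u + √s·v| - √(r+s)·|v|)| ≤ log 2. -/
import Mathlib

noncomputable def stdNormalPDF (x : ℝ) : ℝ :=
  (Real.sqrt (2 * Real.pi))⁻¹ * Real.exp (-x ^ 2 / 2)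

lemma cosh_log_le (t : ℝ) : Real.log (Real.cosh t) ≤ |t| := by
  have h2 : Real.cosh t ≤ Real.exp |t| := by
    rw [Real.cosh_eq]
    have := Real.exp_le_exp.2 (le_abs_self t)
    have := Real.exp_le_exp.2 (neg_le_abs t)
    linarith
  calc Real.log (Real.cosh t) ≤ Real.log (Real.exp |t|) :=
        Real.log_le_log (Real.cosh_pos t) h2
    _ = |t| := Real.log_exp _

lemma cosh_log_ge (t : ℝ) : |t| - Real.log 2 ≤ Real.log (Real.cosh t) := by
  have h1 : Real.exp |t| / 2 ≤ Real.cosh t := by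
    rw [Real.cosh_eq]
    rcases abs_cases t with ⟨h, _⟩ | ⟨h, _⟩ <;> rw [h] <;>
      [have := (Real.exp_pos (-t)).le; have := (Real.exp_pos t).le] <;> linarith
  calc |t| - Real.log 2 = Real.log (Real.exp |t| / 2) := by
        rw [Real.log_div (Real.exp_pos _).ne' two_ne_zero, Real.log_exp]
    _ ≤ _ := Real.log_le_log (by positivity) h1

set_option maxHeartbeats 1000000 in
theorem lr_approx (n : ℕ) (hn : 2 ≤ n) (r s : ℝ) (hr : 0 < r) (hs : 0 < s) (u v : ℝ) :
    let L := Real.log n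
    let p : ℝ → ℝ → ℝ := fun u v =>
      1 / 2 * stdNormalPDF u * stdNormalPDF (v - Real.sqrt (2 * (r + s) * L)) +
      1 / 2 * stdNormalPDF u * stdNormalPDF (v + Real.sqrt (2 * (r + s) * L))
    let q : ℝ → ℝ → ℝ := fun u v =>
      1 / 2 * stdNormalPDF (u - Real.sqrt (2 * r * L)) * stdNormalPDF (v - Real.sqrt (2 * s * L)) +
      1 / 2 * stdNormalPDF (u + Real.sqrt (2 * r * L)) * stdNormalPDF (v + Real.sqrt (2 * s * L))
    |Real.log (q u v / p u v) -
        Real.sqrt (2 * L) *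
          (|Real.sqrt r * u + Real.sqrt s * v| - Real.sqrt (r + s) * |v|)| ≤ Real.log 2 := by
  intro L p q
  have hL : 0 < L := by
    have : (1:ℝ) < n := by exact_mod_cast lt_of_lt_of_le one_lt_two hn
    exact Real.log_pos this
  have hCpos : 0 < (Real.sqrt (2 * Real.pi))⁻¹ := by positivity
  have ha2 : Real.sqrt (2 * r * L) ^ 2 = 2 * r * L := Real.sq_sqrt (by positivity)
  have hb2 : Real.sqrt (2 * s * L) ^ 2 = 2 * s * L := Real.sq_sqrt (by positivity)
  have hc2 : Real.sqrt (2 * (r + s) * L) ^ 2 = 2 * (r + s) * L := Real.sq_sqrt (by positivity)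
  set a := Real.sqrt (2 * r * L) with ha
  set b := Real.sqrt (2 * s * L) with hb
  set c := Real.sqrt (2 * (r + s) * L) with hc
  set E : ℝ := Real.exp (-(u^2 + v^2 + 2*(r+s)*L)/2) with hE
  have e1 : Real.exp (-(u - a)^2/2) * Real.exp (-(v - b)^2/2)
      = E * Real.exp (a*u + b*v) := by
    rw [← Real.exp_add, hE, ← Real.exp_add]
    congr 1
    nlinarith [ha2, hb2]
  have e2 : Real.exp (-(u + a)^2/2) * Real.exp (-(v + b)^2/2)
      = E * Real.exp (-(a*u + b*v)) := by
    rw [← Real.exp_add, hE, ← Real.exp_add]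
    congr 1
    nlinarith [ha2, hb2]
  have e3 : Real.exp (-u^2/2) * Real.exp (-(v - c)^2/2)
      = E * Real.exp (c*v) := by
    rw [← Real.exp_add, hE, ← Real.exp_add]
    congr 1
    nlinarith [hc2]
  have e4 : Real.exp (-u^2/2) * Real.exp (-(v + c)^2/2)
      = E * Real.exp (-(c*v)) := by
    rw [← Real.exp_add, hE, ← Real.exp_add]
    congr 1
    nlinarith [hc2]
  have hq : q u v = ((Real.sqrt (2 * Real.pi))⁻¹)^2 * E * Real.cosh (a*u + b*v) := by
    simp only [q, stdNormalPDF, Real.cosh_eq, ← ha, ← hb]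
    linear_combination ((Real.sqrt (2 * Real.pi))⁻¹^2/2) * e1 + ((Real.sqrt (2 * Real.pi))⁻¹^2/2) * e2
  have hp : p u v = ((Real.sqrt (2 * Real.pi))⁻¹)^2 * E * Real.cosh (c*v) := by
    simp only [p, stdNormalPDF, Real.cosh_eq, ← hc]
    linear_combination ((Real.sqrt (2 * Real.pi))⁻¹^2/2) * e3 + ((Real.sqrt (2 * Real.pi))⁻¹^2/2) * e4
  have hEpos : 0 < E := Real.exp_pos _
  have hdiv : q u v / p u v = Real.cosh (a*u + b*v) / Real.cosh (c*v) := by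
    rw [hq, hp, mul_div_mul_left _ _ (by positivity)]
  have hlog : Real.log (q u v / p u v)
      = Real.log (Real.cosh (a*u + b*v)) - Real.log (Real.cosh (c*v)) := by
    rw [hdiv, Real.log_div (Real.cosh_pos _).ne' (Real.cosh_pos _).ne']
  have hk : (0:ℝ) ≤ Real.sqrt (2*L) := Real.sqrt_nonneg _
  have haX : a = Real.sqrt (2*L) * Real.sqrt r := by
    rw [ha, ← Real.sqrt_mul (by positivity : (0:ℝ) ≤ 2*L)]
    congr 1; ring
  have hbX : b = Real.sqrt (2*L) * Real.sqrt s := by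
    rw [hb, ← Real.sqrt_mul (by positivity : (0:ℝ) ≤ 2*L)]
    congr 1; ring
  have hcX : c = Real.sqrt (2*L) * Real.sqrt (r+s) := by
    rw [hc, ← Real.sqrt_mul (by positivity : (0:ℝ) ≤ 2*L)]
    congr 1; ring
  have hX : Real.sqrt (2*L) * |Real.sqrt r * u + Real.sqrt s * v| = |a*u + b*v| := by
    rw [← abs_of_nonneg hk, ← abs_mul]
    congr 1
    rw [haX, hbX]; ring
  have hY : Real.sqrt (2*L) * (Real.sqrt (r+s) * |v|) = |c*v| := by
    have hcnn : 0 ≤ c := hc ▸ Real.sqrt_nonneg _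
    rw [abs_mul, abs_of_nonneg hcnn, hcX]
    ring
  have key : Real.log (q u v / p u v) -
      Real.sqrt (2 * L) * (|Real.sqrt r * u + Real.sqrt s * v| - Real.sqrt (r + s) * |v|)
      = (Real.log (Real.cosh (a*u+b*v)) - |a*u+b*v|) - (Real.log (Real.cosh (c*v)) - |c*v|) := by
    rw [hlog, mul_sub, hX, ← mul_assoc] at *
    rw [← hY]; ring
  rw [key]
  have h1 := cosh_log_le (a*u+b*v)
  have h2 := cosh_log_ge (a*u+b*v)
  have h3 := cosh_log_le (c*v)
  have h4 := cosh_log_ge (c*v)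
  rw [abs_le]
  constructor <;> linarith
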